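/- Let d(u,v,f) denote the length of the shortest u→v path avoiding failure f in a weighted digraph, and let k_i, k_{i+1} be two vertices on the canonical shortest path uv with f lying strictly between them. Let y be a vertex on the segment [k_i, k_{i+1}] maximizing d(u,v,y). Then d(u,v,f) = min{ d(u,k_{i+1},f) + d(k_{i+1},v), d(u,k_i) + d(k_i,v,f), d(u,v,y) }, where d(·,·) without a failure denotes ordinary shortest-path distance. -/

import Mathlib

variable {V : Type*} [DecidableEq V]

/-- `p` is a walk from `u` to `v` using edges of `E` (given as a list of vertices). -/
def IsWalk (E : Finset (V × V)) (u v : V) (p : List V) : Prop :=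
  p.head? = some u ∧ p.getLast? = some v ∧ p.Chain' (fun a b => (a, b) ∈ E)

/-- The edges of a path given as a list of vertices. -/
def pathEdges (p : List V) : List (V × V) := p.zip p.tail

/-- Total weight of a path. -/
def wt (w : V × V → ℕ) (p : List V) : ℕ := ((pathEdges p).map w).sum

/-- `p` is a shortest walk from `u` to `v` in the graph with edge set `E` and weights `w`. -/
def IsShortest (E : Finset (V × V)) (w : V × V → ℕ) (u v : V) (p : List V) : Prop :=
  IsWalk E u v p ∧ ∀ q, IsWalk E u v q → wt w p ≤ wt w q

/-- `e` is the bottleneck (`≺`-smallest) edge of the path `p`. -/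
def IsBottleneck [LinearOrder (V × V)] (p : List V) (e : V × V) : Prop :=
  e ∈ pathEdges p ∧ ∀ e' ∈ pathEdges p, e ≤ e'

/-- `e = w_{G'}(u,v)`: the `≺`-largest edge that is the bottleneck edge of some
shortest `u → v` path. -/
def IsMaxBottleneck [LinearOrder (V × V)] (E : Finset (V × V)) (w : V × V → ℕ)
    (u v : V) (e : V × V) : Prop :=
  (∃ p, IsShortest E w u v p ∧ IsBottleneck p e) ∧
  ∀ e', (∃ p, IsShortest E w u v p ∧ IsBottleneck p e') → e' ≤ e

/-- `ρ` is the canonical shortest-path function: `ρ u u` is the trivial path, and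
for `u ≠ v` (with `v` reachable from `u`), `ρ u v` is a shortest path obtained by
concatenating `ρ u u⋆`, the edge `w_{G'}(u,v) = (u⋆, v⋆)`, and `ρ v⋆ v`. -/
def IsCanonical [LinearOrder (V × V)] (E : Finset (V × V)) (w : V × V → ℕ)
    (ρ : V → V → List V) : Prop :=
  (∀ u, ρ u u = [u]) ∧
  (∀ u v, u ≠ v → (∃ p, IsWalk E u v p) →
    IsShortest E w u v (ρ u v) ∧
    ∃ e, IsMaxBottleneck E w u v e ∧ ρ u v = ρ u e.1 ++ ρ e.2 v)

/-- Shortest-path distance in the graph `(E, w)`, `⊤` if unreachable. -/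
noncomputable def gdist (E : Finset (V × V)) (w : V × V → ℕ) (u v : V) : ℕ∞ :=
  sInf {n : ℕ∞ | ∃ p, IsWalk E u v p ∧ (wt w p : ℕ∞) = n}

/-- Remove a failed vertex or edge from the edge set. -/
def removeF (E : Finset (V × V)) (f : V ⊕ (V × V)) : Finset (V × V) :=
  match f with
  | Sum.inl x => E.filter (fun e => e.1 ≠ x ∧ e.2 ≠ x)
  | Sum.inr e0 => E.erase e0

set_option linter.unusedSectionVars false

section Aux
open List

lemma pathEdges_nil : pathEdges ([] : List V) = [] := rfl
lemma pathEdges_single (x : V) : pathEdges [x] = [] := rfl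
lemma pathEdges_cons_cons (x y : V) (l : List V) :
    pathEdges (x :: y :: l) = (x, y) :: pathEdges (y :: l) := rfl

lemma pathEdges_append (xs : List V) (z : V) (ys : List V) :
    pathEdges (xs ++ z :: ys) = pathEdges (xs ++ [z]) ++ pathEdges (z :: ys) := by
  induction xs with
  | nil => simp [pathEdges_single]
  | cons a t ih =>
    cases t with
    | nil => cases ys <;> simp [pathEdges_single, pathEdges_cons_cons]
    | cons b t' =>
      have := ih
      simp only [cons_append, pathEdges_cons_cons] at *
      rw [this]

lemma wt_split (w : V × V → ℕ) (a : List V) (z : V) (b : List V) :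
    wt w (a ++ z :: b) = wt w (a ++ [z]) + wt w (z :: b) := by
  simp [wt, pathEdges_append a z b]

lemma pathEdges_sublist_left (L M : List V) : pathEdges L <+ pathEdges (L ++ M) := by
  induction L with
  | nil => simp [pathEdges_nil]
  | cons a t ih =>
    cases t with
    | nil => simp [pathEdges_single]
    | cons b t' =>
      simp only [cons_append, pathEdges_cons_cons]
      exact (ih).cons₂ _

lemma pathEdges_sublist_right (L M : List V) : pathEdges M <+ pathEdges (L ++ M) := by
  induction L with
  | nil => simp
  | cons a t ih =>
    refine ih.trans ?_
    cases h : t ++ M with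
    | nil => simp [h, pathEdges_nil]
    | cons b l =>
      rw [cons_append, h, pathEdges_cons_cons]
      exact (Sublist.refl _).cons _

lemma chain'_iff_pathEdges {R : V → V → Prop} {l : List V} :
    l.Chain' R ↔ ∀ e ∈ pathEdges l, R e.1 e.2 := by
  induction l with
  | nil => simp [pathEdges_nil, List.Chain']
  | cons a t ih =>
    cases t with
    | nil => simp [pathEdges_single, List.Chain']
    | cons b t' =>
      simp only [List.Chain'] at ih ⊢
      rw [List.isChain_cons_cons, pathEdges_cons_cons, ih]
      simp

lemma isWalk_iff {E : Finset (V × V)} {u v : V} {l : List V} :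
    IsWalk E u v l ↔ l.head? = some u ∧ l.getLast? = some v ∧ ∀ e ∈ pathEdges l, e ∈ E := by
  rw [IsWalk, chain'_iff_pathEdges]

lemma walk_mono {E E' : Finset (V × V)} (h : E ⊆ E') {u v : V} {l : List V}
    (hl : IsWalk E u v l) : IsWalk E' u v l := by
  rw [isWalk_iff] at *
  exact ⟨hl.1, hl.2.1, fun e he => h (hl.2.2 e he)⟩

lemma isWalk_split {E : Finset (V × V)} {u v : V} {a : List V} {z : V} {b : List V}
    (h : IsWalk E u v (a ++ z :: b)) :
    IsWalk E u z (a ++ [z]) ∧ IsWalk E z v (z :: b) := by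
  rw [isWalk_iff] at h
  obtain ⟨h1, h2, h3⟩ := h
  rw [pathEdges_append] at h3
  constructor
  · refine isWalk_iff.2 ⟨?_, by simp, fun e he => h3 e (by simp [he])⟩
    rcases a with - | ⟨c, t⟩
    · simpa using h1
    · simpa using h1
  · refine isWalk_iff.2 ⟨rfl, ?_, fun e he => h3 e (by simp [he])⟩
    rwa [getLast?_append_cons] at h2

lemma isWalk_join {E : Finset (V × V)} {u z v : V} {a b : List V}
    (h1 : IsWalk E u z (a ++ [z])) (h2 : IsWalk E z v (z :: b)) :
    IsWalk E u v (a ++ z :: b) := by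
  rw [isWalk_iff] at *
  refine ⟨?_, ?_, ?_⟩
  · rcases a with - | ⟨c, t⟩
    · simpa using h1.1
    · simpa using h1.1
  · rw [getLast?_append_cons]; exact h2.2.1
  · rw [pathEdges_append]
    intro e he
    rcases mem_append.1 he with h | h
    · exact h1.2.2 e h
    · exact h2.2.2 e h

end Aux
section Aux2
open List

lemma gdist_le {E : Finset (V × V)} {w : V × V → ℕ} {u v : V} {q : List V}
    (h : IsWalk E u v q) : gdist E w u v ≤ wt w q :=
  sInf_le ⟨q, h, rfl⟩

lemma gdist_exists {E : Finset (V × V)} {w : V × V → ℕ} {u v : V}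
    (h : gdist E w u v ≠ ⊤) :
    ∃ q, IsWalk E u v q ∧ (wt w q : ℕ∞) = gdist E w u v := by
  set S := {n : ℕ∞ | ∃ p, IsWalk E u v p ∧ (wt w p : ℕ∞) = n} with hS
  have hne : S.Nonempty := by
    by_contra hc
    rw [Set.not_nonempty_iff_eq_empty] at hc
    exact h (by rw [gdist, ← hS, hc, sInf_empty])
  have hmem : sInf S ∈ S := csInf_mem hne
  obtain ⟨q, hq, hwq⟩ := hmem
  exact ⟨q, hq, hwq⟩

lemma gdist_anti {E E' : Finset (V × V)} (hEE : E ⊆ E') (w : V × V → ℕ) (u v : V) :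
    gdist E' w u v ≤ gdist E w u v := by
  apply le_sInf
  rintro n ⟨q, hq, rfl⟩
  exact gdist_le (walk_mono hEE hq)

lemma gdist_eq_of_short {E : Finset (V × V)} {w : V × V → ℕ} {u v : V} {s : List V}
    (h : IsShortest E w u v s) : gdist E w u v = wt w s := by
  refine le_antisymm (gdist_le h.1) (le_sInf ?_)
  rintro n ⟨q, hq, rfl⟩
  exact_mod_cast h.2 q hq

lemma gdist_triangle (E : Finset (V × V)) (w : V × V → ℕ) (u m v : V) :
    gdist E w u v ≤ gdist E w u m + gdist E w m v := by
  rcases eq_or_ne (gdist E w u m) ⊤ with h | h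
  · simp [h]
  rcases eq_or_ne (gdist E w m v) ⊤ with h2 | h2
  · simp [h2]
  obtain ⟨q1, hq1, e1⟩ := gdist_exists h
  obtain ⟨q2, hq2, e2⟩ := gdist_exists h2
  have hq1ne : q1 ≠ [] := by rintro rfl; simp [IsWalk] at hq1
  have hq2ne : q2 ≠ [] := by rintro rfl; simp [IsWalk] at hq2
  have hq1' : q1 = q1.dropLast ++ [m] := by
    have := hq1.2.1
    rw [getLast?_eq_getLast hq1ne] at this
    have hm : q1.getLast hq1ne = m := by injection this
    rw [← hm]
    exact (dropLast_append_getLast hq1ne).symm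
  have hq2' : q2 = m :: q2.tail := by
    have := hq2.1
    rw [head?_eq_head hq2ne] at this
    have hm : q2.head hq2ne = m := by injection this
    rw [← hm]
    exact (cons_head_tail hq2ne).symm
  rw [hq1'] at hq1
  rw [hq2'] at hq2
  have hjoin := isWalk_join hq1 hq2
  calc gdist E w u v ≤ (wt w (q1.dropLast ++ m :: q2.tail) : ℕ∞) := gdist_le hjoin
    _ = (wt w (q1.dropLast ++ [m]) : ℕ∞) + (wt w (m :: q2.tail) : ℕ∞) := by
        rw [wt_split]; push_cast; ring
    _ = _ := by rw [← hq1', ← hq2', e1, e2]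

lemma mem_of_mem_pathEdges {l : List V} {e : V × V} (h : e ∈ pathEdges l) :
    e.1 ∈ l ∧ e.2 ∈ l := by
  induction l with
  | nil => simp [pathEdges_nil] at h
  | cons a t ih =>
    cases t with
    | nil => simp [pathEdges_single] at h
    | cons b t' =>
      rw [pathEdges_cons_cons] at h
      rcases mem_cons.1 h with rfl | h
      · simp
      · have := ih h
        exact ⟨mem_cons_of_mem _ this.1, mem_cons_of_mem _ this.2⟩

lemma eq_append_of_mem_pathEdges {l : List V} {e : V × V} (h : e ∈ pathEdges l) :
    ∃ l1 l2, l = l1 ++ e.1 :: e.2 :: l2 := by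
  induction l with
  | nil => simp [pathEdges_nil] at h
  | cons a t ih =>
    cases t with
    | nil => simp [pathEdges_single] at h
    | cons b t' =>
      rw [pathEdges_cons_cons] at h
      rcases mem_cons.1 h with h | h
      · exact ⟨[], t', by rw [h]; rfl⟩
      · obtain ⟨l1, l2, hl⟩ := ih h
        exact ⟨a :: l1, l2, by rw [cons_append, ← hl]⟩

lemma pathEdges_nodup {l : List V} (h : l.Nodup) : (pathEdges l).Nodup := by
  have hmap : (pathEdges l).map Prod.snd = l.tail :=
    List.map_snd_zip (by cases l <;> simp)
  have ht : l.tail.Nodup := h.sublist (tail_sublist l)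
  rw [← hmap] at ht
  exact ht.of_map _

lemma exists_edge_snd {q1 : List V} (z : V) (h : q1 ≠ []) :
    ∃ e ∈ pathEdges (q1 ++ [z]), e.2 = z := by
  induction q1 with
  | nil => simp at h
  | cons a t ih =>
    cases t with
    | nil => exact ⟨(a, z), by simp [pathEdges_cons_cons, pathEdges_single], rfl⟩
    | cons b t' =>
      obtain ⟨e, he, hez⟩ := ih (by simp)
      refine ⟨e, ?_, hez⟩
      simp only [cons_append, pathEdges_cons_cons]
      exact mem_cons_of_mem _ (by simpa using he)

lemma not_nodup_split {l : List V} (h : ¬ l.Nodup) :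
    ∃ a x b c, l = a ++ x :: (b ++ x :: c) := by
  induction l with
  | nil => simp at h
  | cons z t ih =>
    by_cases hz : z ∈ t
    · obtain ⟨b, c, rfl⟩ := List.append_of_mem hz
      exact ⟨[], z, b, c, rfl⟩
    · have : ¬ t.Nodup := fun ht => h (List.nodup_cons.2 ⟨hz, ht⟩)
      obtain ⟨a, x, b, c, rfl⟩ := ih this
      exact ⟨z :: a, x, b, c, rfl⟩

lemma wt_pos {E : Finset (V × V)} {w : V × V → ℕ} (hw : ∀ e ∈ E, 1 ≤ w e)
    {z : V} {q1 : List V} (hne : q1 ≠ [])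
    (h : ∀ e ∈ pathEdges (q1 ++ [z]), e ∈ E) :
    1 ≤ wt w (q1 ++ [z]) := by
  obtain ⟨e, he, -⟩ := exists_edge_snd z hne
  calc 1 ≤ w e := hw _ (h _ he)
    _ ≤ _ := List.single_le_sum (fun _ _ => Nat.zero_le _) _ (mem_map_of_mem he)

lemma shortest_nodup {E : Finset (V × V)} {w : V × V → ℕ} (hw : ∀ e ∈ E, 1 ≤ w e)
    {u v : V} {s : List V} (h : IsShortest E w u v s) : s.Nodup := by
  by_contra hnd
  obtain ⟨a, x, b, c, hs⟩ := not_nodup_split hnd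
  subst hs
  obtain ⟨h1, h2⟩ := isWalk_split h.1
  have h2' : IsWalk E x v ((x :: b) ++ x :: c) := by
    rw [cons_append]; exact h2
  obtain ⟨h3, h4⟩ := isWalk_split h2'
  have hjoin : IsWalk E u v (a ++ x :: c) := isWalk_join h1 h4
  have hle := h.2 _ hjoin
  have hb1 : 1 ≤ wt w ((x :: b) ++ [x]) :=
    wt_pos hw (by simp) (isWalk_iff.1 h3).2.2
  have e1 : wt w (a ++ x :: (b ++ x :: c)) = wt w (a ++ [x]) + wt w (x :: (b ++ x :: c)) :=
    wt_split w a x _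
  have e2 : wt w ((x :: b) ++ x :: c) = wt w ((x :: b) ++ [x]) + wt w (x :: c) :=
    wt_split w (x :: b) x c
  rw [cons_append] at e2
  have e3 : wt w (a ++ x :: c) = wt w (a ++ [x]) + wt w (x :: c) := wt_split w a x c
  omega

end Aux2
section Core
open List

lemma mem_removeF_inl {E : Finset (V × V)} {x : V} {e : V × V} :
    e ∈ removeF E (Sum.inl x) ↔ e ∈ E ∧ e.1 ≠ x ∧ e.2 ≠ x := by
  simp [removeF, Finset.mem_filter]

lemma mem_removeF_inr {E : Finset (V × V)} {e0 e : V × V} :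
    e ∈ removeF E (Sum.inr e0) ↔ e ≠ e0 ∧ e ∈ E := Finset.mem_erase

lemma core (E F : Finset (V × V)) (w : V × V → ℕ) (hw : ∀ e ∈ E, 1 ≤ w e) (hFE : F ⊆ E)
    (u v ki ki1 y : V) (p1 A2 mid B2 p3 p : List V)
    (hp : p = p1 ++ ki :: (A2 ++ (mid ++ (B2 ++ ki1 :: p3))))
    (hshort : IsShortest E w u v p)
    (hcons : ∀ a m b : List V, p = a ++ m ++ b → ∀ x y : V,
      m.head? = some x → m.getLast? = some y → IsShortest E w x y m)
    (hmid : ∀ z ∈ mid, ∀ e ∈ F, e.1 ≠ z ∧ e.2 ≠ z)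
    (hA : ∀ e ∈ pathEdges (p1 ++ ki :: A2), e ∈ F)
    (hB : ∀ e ∈ pathEdges (B2 ++ ki1 :: p3), e ∈ F)
    (hy : y = ki ∨ y ∈ A2 ∨ y ∈ mid ∨ y ∈ B2 ∨ y = ki1)
    (hterm3 : gdist F w u v ≤ gdist (removeF E (Sum.inl y)) w u v) :
    gdist F w u v =
      min (min (gdist F w u ki1 + gdist E w ki1 v)
               (gdist E w u ki + gdist F w ki v))
          (gdist (removeF E (Sum.inl y)) w u v) := by
  have hnd : p.Nodup := shortest_nodup hw hshort
  have hu : p.head? = some u := hshort.1.1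
  have hv : p.getLast? = some v := hshort.1.2.1
  have hpre : ∀ C z D, p = C ++ z :: D → IsShortest E w u z (C ++ [z]) := by
    intro C z D hCD
    refine hcons [] (C ++ [z]) D (by rw [hCD]; simp) u z ?_ (by simp)
    have h1 : (C ++ z :: D).head? = some u := hCD ▸ hu
    cases C with
    | nil => simpa using h1
    | cons c t => simpa using h1
  have hsuf : ∀ C z D, p = C ++ z :: D → IsShortest E w z v (z :: D) := by
    intro C z D hCD
    refine hcons C (z :: D) [] (by rw [hCD]; simp) z v rfl ?_
    have h1 : (C ++ z :: D).getLast? = some v := hCD ▸ hv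
    rwa [getLast?_append_cons] at h1
  have hp1 : p = (p1 ++ ki :: (A2 ++ (mid ++ B2))) ++ ki1 :: p3 := by rw [hp]; simp
  have hski1 : IsShortest E w ki1 v (ki1 :: p3) := hsuf _ _ _ hp1
  have hdki1 : gdist E w ki1 v = wt w (ki1 :: p3) := gdist_eq_of_short hski1
  have hski : IsShortest E w u ki (p1 ++ [ki]) := hpre p1 ki _ hp
  have hdki : gdist E w u ki = wt w (p1 ++ [ki]) := gdist_eq_of_short hski
  have hwB : IsWalk F ki1 v (ki1 :: p3) := by
    refine isWalk_iff.2 ⟨rfl, (isWalk_iff.1 hski1.1).2.1,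
      fun e he => hB e ((pathEdges_sublist_right B2 _).subset he)⟩
  have hwA : IsWalk F u ki (p1 ++ [ki]) := by
    refine isWalk_iff.2 ⟨(isWalk_iff.1 hski.1).1, by simp, fun e he => hA e ?_⟩
    have h2 : p1 ++ ki :: A2 = (p1 ++ [ki]) ++ A2 := by simp
    rw [h2]
    exact (pathEdges_sublist_left _ _).subset he
  have ht1 : gdist F w u v ≤ gdist F w u ki1 + gdist E w ki1 v := by
    refine (gdist_triangle F w u ki1 v).trans (add_le_add_right ?_ _)
    rw [hdki1]
    exact gdist_le hwB
  have ht2 : gdist F w u v ≤ gdist E w u ki + gdist F w ki v := by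
    refine (gdist_triangle F w u ki v).trans (add_le_add_left ?_ _)
    rw [hdki]
    exact gdist_le hwA
  refine le_antisymm (le_min (le_min ht1 ht2) hterm3) ?_
  rcases eq_or_ne (gdist F w u v) ⊤ with hT | hT
  · rw [hT]; exact le_top
  obtain ⟨q, hq, hwtq⟩ := gdist_exists hT
  rw [← hwtq]
  have hqE : ∀ e ∈ pathEdges q, e ∈ F := (isWalk_iff.1 hq).2.2
  by_cases hki1q : ki1 ∈ q
  · obtain ⟨q1, q2, rfl⟩ := List.append_of_mem hki1q
    obtain ⟨hw1, hw2⟩ := isWalk_split hq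
    refine le_trans (min_le_left _ _) (le_trans (min_le_left _ _) ?_)
    calc gdist F w u ki1 + gdist E w ki1 v
        ≤ (wt w (q1 ++ [ki1]) : ℕ∞) + (wt w (ki1 :: q2) : ℕ∞) :=
          add_le_add (gdist_le hw1) (gdist_le (walk_mono hFE hw2))
      _ = _ := by rw [← Nat.cast_add, ← wt_split]
  by_cases hkiq : ki ∈ q
  · obtain ⟨q1, q2, rfl⟩ := List.append_of_mem hkiq
    obtain ⟨hw1, hw2⟩ := isWalk_split hq
    refine le_trans (min_le_left _ _) (le_trans (min_le_right _ _) ?_)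
    calc gdist E w u ki + gdist F w ki v
        ≤ (wt w (q1 ++ [ki]) : ℕ∞) + (wt w (ki :: q2) : ℕ∞) :=
          add_le_add (gdist_le (walk_mono hFE hw1)) (gdist_le hw2)
      _ = _ := by rw [← Nat.cast_add, ← wt_split]
  by_cases hyq : y ∈ q
  swap
  · refine le_trans (min_le_right _ _) ?_
    refine gdist_le (isWalk_iff.2 ⟨(isWalk_iff.1 hq).1, (isWalk_iff.1 hq).2.1, fun e he => ?_⟩)
    have hmem := mem_of_mem_pathEdges he
    refine mem_removeF_inl.2 ⟨hFE (hqE e he), ?_, ?_⟩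
    · rintro h; exact hyq (h ▸ hmem.1)
    · rintro h; exact hyq (h ▸ hmem.2)
  have hymid : y ∉ mid := by
    intro hym
    have hup : u ∈ p1 ++ [ki] := by
      have h1 : (p1 ++ ki :: (A2 ++ (mid ++ (B2 ++ ki1 :: p3)))).head? = some u := hp ▸ hu
      cases p1 with
      | nil =>
        simp only [nil_append, head?_cons, Option.some.injEq] at h1
        simp [h1]
      | cons c t =>
        simp only [cons_append, head?_cons, Option.some.injEq] at h1
        simp [h1]
    have hyu : y ≠ u := by
      rintro rfl
      have hnd' : ((p1 ++ [ki]) ++ (A2 ++ (mid ++ (B2 ++ ki1 :: p3)))).Nodup := by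
        have heq : (p1 ++ [ki]) ++ (A2 ++ (mid ++ (B2 ++ ki1 :: p3))) = p := by rw [hp]; simp
        rw [heq]; exact hnd
      exact (List.disjoint_of_nodup_append hnd') hup
        (mem_append_right _ (mem_append_left _ hym))
    obtain ⟨q1, q2, rfl⟩ := List.append_of_mem hyq
    cases q1 with
    | nil =>
      have h1 := (isWalk_iff.1 hq).1
      simp only [nil_append, head?_cons, Option.some.injEq] at h1
      exact hyu h1
    | cons c t =>
      obtain ⟨e, he, hez⟩ := exists_edge_snd y (q1 := c :: t) (by simp)
      have hsub : e ∈ pathEdges ((c :: t) ++ y :: q2) := by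
        have h2 : (c :: t) ++ y :: q2 = ((c :: t) ++ [y]) ++ q2 := by simp
        rw [h2]
        exact (pathEdges_sublist_left _ _).subset he
      exact (hmid y hym e (hqE e hsub)).2 hez
  have hyki : y ≠ ki := fun h => hkiq (h ▸ hyq)
  have hyki1 : y ≠ ki1 := fun h => hki1q (h ▸ hyq)
  have hyAB : y ∈ A2 ∨ y ∈ B2 := by
    rcases hy with h | h | h | h | h
    · exact absurd h hyki
    · exact Or.inl h
    · exact absurd h hymid
    · exact Or.inr h
    · exact absurd h hyki1
  obtain ⟨q1, q2, rfl⟩ := List.append_of_mem hyq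
  obtain ⟨hwq1, hwq2⟩ := isWalk_split hq
  have hwtqsplit : wt w (q1 ++ y :: q2) = wt w (q1 ++ [y]) + wt w (y :: q2) := wt_split w q1 y q2
  rcases hyAB with hyA | hyB
  · -- y ∈ A2 : use term 2
    obtain ⟨C, D, hA2⟩ := List.append_of_mem hyA
    have hpy : p = (p1 ++ ki :: C) ++ y :: (D ++ (mid ++ (B2 ++ ki1 :: p3))) := by
      rw [hp, hA2]; simp
    have hsy : IsShortest E w u y ((p1 ++ ki :: C) ++ [y]) := hpre _ _ _ hpy
    have hFkiy : IsWalk F ki y ((ki :: C) ++ [y]) := by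
      refine isWalk_iff.2 ⟨rfl, by rw [getLast?_append_cons]; rfl, fun e he => hA e ?_⟩
      have h2 : p1 ++ ki :: A2 = p1 ++ (((ki :: C) ++ [y]) ++ D) := by rw [hA2]; simp
      rw [h2]
      exact ((pathEdges_sublist_left _ D).trans (pathEdges_sublist_right p1 _)).subset he
    have hWalk : IsWalk F ki v ((ki :: C) ++ y :: q2) := isWalk_join hFkiy hwq2
    have e1 : gdist F w ki v ≤ (wt w ((ki :: C) ++ y :: q2) : ℕ∞) := gdist_le hWalk
    have harith : wt w (p1 ++ [ki]) + wt w ((ki :: C) ++ y :: q2) ≤ wt w (q1 ++ y :: q2) := by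
      have h3 : wt w ((ki :: C) ++ y :: q2) = wt w ((ki :: C) ++ [y]) + wt w (y :: q2) :=
        wt_split w (ki :: C) y q2
      have h4 : wt w (p1 ++ ki :: (C ++ [y])) = wt w (p1 ++ [ki]) + wt w (ki :: (C ++ [y])) :=
        wt_split w p1 ki (C ++ [y])
      have h5 : wt w ((p1 ++ ki :: C) ++ [y]) ≤ wt w (q1 ++ [y]) := hsy.2 _ (walk_mono hFE hwq1)
      rw [show (p1 ++ ki :: C) ++ [y] = p1 ++ ki :: (C ++ [y]) by simp] at h5
      rw [show (ki :: C) ++ [y] = ki :: (C ++ [y]) from rfl] at h3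
      omega
    refine le_trans (min_le_left _ _) (le_trans (min_le_right _ _) ?_)
    calc gdist E w u ki + gdist F w ki v
        ≤ (wt w (p1 ++ [ki]) : ℕ∞) + (wt w ((ki :: C) ++ y :: q2) : ℕ∞) :=
          add_le_add (le_of_eq (by rw [hdki])) e1
      _ ≤ _ := by exact_mod_cast harith
  · -- y ∈ B2 : use term 1
    obtain ⟨C, D, hB2⟩ := List.append_of_mem hyB
    have hpy : p = (p1 ++ ki :: (A2 ++ (mid ++ C))) ++ y :: (D ++ ki1 :: p3) := by
      rw [hp, hB2]; simp
    have hsy : IsShortest E w y v (y :: (D ++ ki1 :: p3)) := hsuf _ _ _ hpy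
    have hFyki1 : IsWalk F y ki1 (y :: (D ++ [ki1])) := by
      refine isWalk_iff.2 ⟨rfl, ?_, fun e he => hB e ?_⟩
      · show ((y :: D) ++ [ki1]).getLast? = some ki1
        rw [getLast?_append_cons]; rfl
      · have h2 : B2 ++ ki1 :: p3 = C ++ ((y :: (D ++ [ki1])) ++ p3) := by rw [hB2]; simp
        rw [h2]
        exact ((pathEdges_sublist_left _ p3).trans (pathEdges_sublist_right C _)).subset he
    have hWalk : IsWalk F u ki1 (q1 ++ y :: (D ++ [ki1])) := isWalk_join hwq1 hFyki1
    have e1 : gdist F w u ki1 ≤ (wt w (q1 ++ y :: (D ++ [ki1])) : ℕ∞) := gdist_le hWalk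
    have harith : wt w (q1 ++ y :: (D ++ [ki1])) + wt w (ki1 :: p3) ≤ wt w (q1 ++ y :: q2) := by
      have h3 : wt w (q1 ++ y :: (D ++ [ki1])) = wt w (q1 ++ [y]) + wt w (y :: (D ++ [ki1])) :=
        wt_split w q1 y _
      have h4 : wt w (y :: (D ++ ki1 :: p3)) = wt w (y :: (D ++ [ki1])) + wt w (ki1 :: p3) := by
        have := wt_split w (y :: D) ki1 p3
        simpa using this
      have h5 : wt w (y :: (D ++ ki1 :: p3)) ≤ wt w (y :: q2) := hsy.2 _ (walk_mono hFE hwq2)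
      omega
    refine le_trans (min_le_left _ _) (le_trans (min_le_left _ _) ?_)
    calc gdist F w u ki1 + gdist E w ki1 v
        ≤ (wt w (q1 ++ y :: (D ++ [ki1])) : ℕ∞) + (wt w (ki1 :: p3) : ℕ∞) :=
          add_le_add e1 (le_of_eq (by rw [hdki1]))
      _ ≤ _ := by exact_mod_cast harith

end Core

section Main
open List

theorem stmt11 (E : Finset (V × V)) (w : V × V → ℕ) (hw : ∀ e ∈ E, 1 ≤ w e)
    (u v ki ki1 : V) (p1 p2 p3 : List V) (p : List V)
    (hp : p = p1 ++ [ki] ++ p2 ++ [ki1] ++ p3)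
    (hshort : IsShortest E w u v p)
    (hcons : ∀ a m b : List V, p = a ++ m ++ b → ∀ x y : V,
      m.head? = some x → m.getLast? = some y → IsShortest E w x y m)
    (f : V ⊕ (V × V))
    (hf : match f with
      | Sum.inl x => x ∈ p2
      | Sum.inr e0 => e0 ∈ pathEdges ([ki] ++ p2 ++ [ki1]))
    (y : V) (hy : y ∈ [ki] ++ p2 ++ [ki1])
    (hymax : ∀ z ∈ [ki] ++ p2 ++ [ki1],
      gdist (removeF E (Sum.inl z)) w u v ≤ gdist (removeF E (Sum.inl y)) w u v) :
    gdist (removeF E f) w u v =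
      min (min (gdist (removeF E f) w u ki1 + gdist E w ki1 v)
               (gdist E w u ki + gdist (removeF E f) w ki v))
          (gdist (removeF E (Sum.inl y)) w u v) := by

  have hnd : p.Nodup := shortest_nodup hw hshort
  have hend : (pathEdges p).Nodup := pathEdges_nodup hnd
  have hEp : ∀ e ∈ pathEdges p, e ∈ E := (isWalk_iff.1 hshort.1).2.2
  cases f with
  | inl x =>
    have hFE : removeF E (Sum.inl x) ⊆ E := Finset.filter_subset _ _
    have hx : x ∈ p2 := hf
    obtain ⟨p2a, p2b, rfl⟩ := List.append_of_mem hx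
    have hp' : p = p1 ++ ki :: (p2a ++ ([x] ++ (p2b ++ ki1 :: p3))) := by rw [hp]; simp
    have hxA : x ∉ p1 ++ ki :: p2a := by
      have hnd' : ((p1 ++ ki :: p2a) ++ (x :: (p2b ++ ki1 :: p3))).Nodup := by
        have heq : (p1 ++ ki :: p2a) ++ (x :: (p2b ++ ki1 :: p3)) = p := by rw [hp]; simp
        rw [heq]; exact hnd
      intro hmem
      exact (List.disjoint_of_nodup_append hnd') hmem mem_cons_self
    have hxB : x ∉ p2b ++ ki1 :: p3 := by
      have hnd' : ((p1 ++ ki :: (p2a ++ [x])) ++ (p2b ++ ki1 :: p3)).Nodup := by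
        have heq : (p1 ++ ki :: (p2a ++ [x])) ++ (p2b ++ ki1 :: p3) = p := by rw [hp]; simp
        rw [heq]; exact hnd
      intro hmem
      refine (List.disjoint_of_nodup_append hnd') ?_ hmem
      simp
    refine core E (removeF E (Sum.inl x)) w hw hFE u v ki ki1 y p1 p2a [x] p2b p3 p hp'
      hshort hcons ?_ ?_ ?_ ?_ ?_
    · intro z hz e he
      rcases List.mem_singleton.1 hz with rfl
      exact (mem_removeF_inl.1 he).2
    · intro e he
      have heE : e ∈ E := by
        refine hEp e ?_
        have heq : p = (p1 ++ ki :: p2a) ++ (x :: (p2b ++ ki1 :: p3)) := by rw [hp]; simp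
        rw [heq]
        exact (pathEdges_sublist_left _ _).subset he
      have hmem := mem_of_mem_pathEdges he
      refine mem_removeF_inl.2 ⟨heE, ?_, ?_⟩
      · rintro h; exact hxA (h ▸ hmem.1)
      · rintro h; exact hxA (h ▸ hmem.2)
    · intro e he
      have heE : e ∈ E := by
        refine hEp e ?_
        have heq : p = (p1 ++ ki :: (p2a ++ [x])) ++ (p2b ++ ki1 :: p3) := by rw [hp]; simp
        rw [heq]
        exact (pathEdges_sublist_right _ _).subset he
      have hmem := mem_of_mem_pathEdges he
      refine mem_removeF_inl.2 ⟨heE, ?_, ?_⟩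
      · rintro h; exact hxB (h ▸ hmem.1)
      · rintro h; exact hxB (h ▸ hmem.2)
    · have h := hy; simp at h; simp only [List.mem_singleton]; tauto
    · exact hymax x (by simp)
  | inr e0 =>
    obtain ⟨a, b⟩ := e0
    have hFE : removeF E (Sum.inr (a, b)) ⊆ E := Finset.erase_subset _ _
    have hab : (a, b) ∈ pathEdges ([ki] ++ p2 ++ [ki1]) := hf
    obtain ⟨l1, l2, hseg⟩ := eq_append_of_mem_pathEdges hab
    have hseg' : ki :: (p2 ++ [ki1]) = (l1 ++ [a]) ++ b :: l2 := by
      simpa using hseg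
    have hheadki : (l1 ++ [a]).head? = some ki := by
      have h1 : ((l1 ++ [a]) ++ b :: l2).head? = some ki := by rw [← hseg']; rfl
      rwa [head?_append_of_ne_nil _ (by simp)] at h1
    set A2 : List V := (l1 ++ [a]).tail with hA2def
    have hkiA2 : ki :: A2 = l1 ++ [a] := cons_head?_tail hheadki
    have hlastki1 : (b :: l2).getLast? = some ki1 := by
      have h1 : ((l1 ++ [a]) ++ b :: l2).getLast? = some ki1 := by
        rw [← hseg']
        rw [show ki :: (p2 ++ [ki1]) = (ki :: p2) ++ [ki1] by simp, getLast?_append_cons]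
        rfl
      rwa [getLast?_append_cons] at h1
    set B2 : List V := (b :: l2).dropLast with hB2def
    have hB2ki1 : B2 ++ [ki1] = b :: l2 := by
      have hne : b :: l2 ≠ [] := by simp
      have hlast : (b :: l2).getLast hne = ki1 := by
        rw [getLast?_eq_getLast hne] at hlastki1
        injection hlastki1
      rw [hB2def, ← hlast]
      exact dropLast_append_getLast hne
    have hp2AB : p2 = A2 ++ B2 := by
      have h1 : ki :: (p2 ++ [ki1]) = ki :: ((A2 ++ B2) ++ [ki1]) := by
        rw [hseg', ← hkiA2, ← hB2ki1]; simp
      have h2 : p2 ++ [ki1] = (A2 ++ B2) ++ [ki1] := by injection h1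
      exact append_cancel_right h2
    have hpab : p = (p1 ++ l1 ++ [a]) ++ b :: (l2 ++ p3) := by
      rw [hp, show p1 ++ [ki] ++ p2 ++ [ki1] ++ p3 = p1 ++ (ki :: (p2 ++ [ki1])) ++ p3 by simp,
        hseg']
      simp
    have hpe : pathEdges p
        = (pathEdges (p1 ++ l1 ++ [a]) ++ [(a, b)]) ++ pathEdges (b :: (l2 ++ p3)) := by
      rw [hpab, pathEdges_append (p1 ++ l1 ++ [a]) b (l2 ++ p3),
        show (p1 ++ l1 ++ [a]) ++ [b] = (p1 ++ l1) ++ a :: [b] by simp,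
        pathEdges_append (p1 ++ l1) a [b]]
      rfl
    have hnd2 : ((pathEdges (p1 ++ l1 ++ [a]) ++ [(a, b)])
        ++ pathEdges (b :: (l2 ++ p3))).Nodup := by rw [← hpe]; exact hend
    have habL : (a, b) ∉ pathEdges (p1 ++ l1 ++ [a]) := by
      intro hmem
      exact (List.nodup_append.1 (List.nodup_append.1 hnd2).1).2.2 (a, b) hmem (a, b) (by simp) rfl
    have habR : (a, b) ∉ pathEdges (b :: (l2 ++ p3)) := by
      intro hmem
      exact (List.nodup_append.1 hnd2).2.2 (a, b) (by simp) (a, b) hmem rfl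
    have hPA : p1 ++ ki :: A2 = p1 ++ l1 ++ [a] := by
      rw [hkiA2, ← append_assoc]
    have hPB : B2 ++ ki1 :: p3 = b :: (l2 ++ p3) := by
      rw [show B2 ++ ki1 :: p3 = (B2 ++ [ki1]) ++ p3 by simp, hB2ki1]
      simp
    have hp' : p = p1 ++ ki :: (A2 ++ ([] ++ (B2 ++ ki1 :: p3))) := by
      rw [hp, hp2AB]; simp
    refine core E (removeF E (Sum.inr (a, b))) w hw hFE u v ki ki1 y p1 A2 [] B2 p3 p hp'
      hshort hcons ?_ ?_ ?_ ?_ ?_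
    · intro z hz; simp at hz
    · intro e he
      rw [hPA] at he
      have heE : e ∈ E := hEp e (by rw [hpe]; exact mem_append_left _ (mem_append_left _ he))
      refine mem_removeF_inr.2 ⟨?_, heE⟩
      rintro rfl; exact habL he
    · intro e he
      rw [hPB] at he
      have heE : e ∈ E := hEp e (by rw [hpe]; exact mem_append_right _ he)
      refine mem_removeF_inr.2 ⟨?_, heE⟩
      rintro rfl; exact habR he
    · have h := hy; rw [hp2AB] at h; simp at h; tauto
    · refine le_trans (gdist_anti ?_ w u v) (hymax a ?_)
      · intro e he
        have h1 := mem_removeF_inl.1 he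
        refine mem_removeF_inr.2 ⟨?_, h1.1⟩
        rintro rfl; exact h1.2.1 rfl
      · have h : a ∈ ki :: (p2 ++ [ki1]) := by rw [hseg']; simp
        simpa using h


end Main
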